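/- Shared-randomness bound for the pair-relation task (Corollary 2, part (i)): Let d ≥ 2 and consider the pair-relation task whose input set M consists of the relations R_{i j k l} = {(i,k),(j,l)} ⊆ Fin d × Fin 2 for i < j in Fin d and k,l ∈ Fin 2, with uniform weights ω m = 1/(2d(d-1)). Then the maximum of the payoff S_W over all shared-randomness-assisted wire-reading distributions equals 3/4 (the bound holds for all such distributions and is attained). -/

import Mathlib

open Finset

/-- The input set of the pair-relation task on `(d,2)`: all relations
`R_{ijkl} = {(i,k),(j,l)}` with `i < j` in `Fin d` and `k,l ∈ Fin 2`. -/
def pairM (d : ℕ) : Finset (Finset (Fin d × Fin 2)) :=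
  ((Finset.univ : Finset (Fin d × Fin d × Fin 2 × Fin 2)).filter
      (fun q => q.1 < q.2.1)).image
    (fun q => ({(q.1, q.2.2.1), (q.2.1, q.2.2.2)} : Finset (Fin d × Fin 2)))

/-- The payoff of the pair-relation task on `(d,2)` with uniform weights
`ω m = 1/(2d(d-1))`, for the wire-reading conditional distribution
`𝒩 τ' n m = 𝒩(τ',n|m)`. -/
noncomputable def pairPayoff (d : ℕ)
    (𝒩 : Fin d → Fin 2 → Finset (Fin d × Fin 2) → ℝ) : ℝ :=
  ∑ m ∈ pairM d, ∑ p ∈ m,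
    (1 / (2 * (d : ℝ) * ((d : ℝ) - 1))) * 𝒩 p.1 p.2 m

section Aux

variable {d : ℕ}

lemma pair_inj {i j i' j' : Fin d} {k l k' l' : Fin 2} (hij : i < j) (hij' : i' < j')
    (h : ({(i,k),(j,l)} : Finset (Fin d × Fin 2)) = {(i',k'),(j',l')}) :
    i = i' ∧ j = j' ∧ k = k' ∧ l = l' := by
  have h1 : ((i,k) : Fin d × Fin 2) ∈ ({(i',k'),(j',l')} : Finset (Fin d × Fin 2)) := by
    rw [← h]; simp
  have h2 : ((j,l) : Fin d × Fin 2) ∈ ({(i',k'),(j',l')} : Finset (Fin d × Fin 2)) := by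
    rw [← h]; simp
  simp only [Finset.mem_insert, Finset.mem_singleton, Prod.mk.injEq] at h1 h2
  rcases h1 with ⟨hi, hk⟩ | ⟨hi, hk⟩ <;> rcases h2 with ⟨hj, hl⟩ | ⟨hj, hl⟩
  · subst hi; subst hj; exact absurd hij (lt_irrefl _)
  · exact ⟨hi, hj, hk, hl⟩
  · subst hi; subst hj; exact absurd (hij.trans hij') (lt_irrefl _)
  · subst hi; subst hj; exact absurd hij (lt_irrefl _)

lemma payoff_eq (𝒩 : Fin d → Fin 2 → Finset (Fin d × Fin 2) → ℝ) :
    pairPayoff d 𝒩 =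
      ∑ q ∈ univ.filter (fun q : Fin d × Fin d × Fin 2 × Fin 2 => q.1 < q.2.1),
        (1 / (2 * (d : ℝ) * ((d : ℝ) - 1))) *
          (𝒩 q.1 q.2.2.1 ({(q.1, q.2.2.1), (q.2.1, q.2.2.2)} : Finset (Fin d × Fin 2))
            + 𝒩 q.2.1 q.2.2.2 ({(q.1, q.2.2.1), (q.2.1, q.2.2.2)} : Finset (Fin d × Fin 2))) := by
  unfold pairPayoff pairM
  rw [Finset.sum_image]
  · refine Finset.sum_congr rfl fun q hq => ?_
    rw [Finset.mem_filter] at hq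
    have hne : ((q.1, q.2.2.1) : Fin d × Fin 2) ≠ (q.2.1, q.2.2.2) := by
      intro hcon
      have := congrArg Prod.fst hcon
      exact absurd (this ▸ hq.2) (lt_irrefl _)
    rw [Finset.sum_pair hne, mul_add]
  · intro q hq q' hq' h
    rw [Finset.mem_coe, Finset.mem_filter] at hq hq'
    obtain ⟨i, j, k, l⟩ := q
    obtain ⟨i', j', k', l'⟩ := q'
    obtain ⟨e1, e2, e3, e4⟩ := pair_inj hq.2 hq'.2 h
    simp_all

lemma sum_T (f : Fin d × Fin d × Fin 2 × Fin 2 → ℝ) :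
    ∑ q ∈ univ.filter (fun q : Fin d × Fin d × Fin 2 × Fin 2 => q.1 < q.2.1), f q
    = ∑ i : Fin d, ∑ j : Fin d, if i < j then ∑ k : Fin 2, ∑ l : Fin 2, f (i,j,k,l) else 0 := by
  rw [Finset.sum_filter, Fintype.sum_prod_type]
  refine Finset.sum_congr rfl fun i _ => ?_
  rw [Fintype.sum_prod_type]
  refine Finset.sum_congr rfl fun j _ => ?_
  by_cases h : i < j
  · simp [h, Fintype.sum_prod_type]
  · simp [h]

lemma sum_if_lt (d : ℕ) (c : ℝ) :
    ∑ i : Fin d, ∑ j : Fin d, (if i < j then c else 0) = c * ((d:ℝ) * ((d:ℝ) - 1)) / 2 := by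
  have key : ∀ i j : Fin d,
      ((if i < j then c else 0) + (if j < i then c else 0) + (if i = j then c else 0)) = c := by
    intro i j
    rcases lt_trichotomy i j with h | h | h
    · simp [h, asymm h, h.ne]
    · simp [h, lt_irrefl]
    · simp [asymm h, h, h.ne']
  have hsum : ∑ i : Fin d, ∑ j : Fin d,
      ((if i < j then c else 0) + (if j < i then c else 0) + (if i = j then c else 0))
      = (d:ℝ) * (d:ℝ) * c := by
    simp only [key, Finset.sum_const, card_univ, Fintype.card_fin, nsmul_eq_mul]
    ring
  simp only [Finset.sum_add_distrib] at hsum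
  have hswap : ∑ i : Fin d, ∑ j : Fin d, (if j < i then c else 0)
      = ∑ i : Fin d, ∑ j : Fin d, (if i < j then c else 0) := Finset.sum_comm
  have hdiag : ∑ i : Fin d, ∑ j : Fin d, (if i = j then c else 0) = (d:ℝ) * c := by
    simp [Finset.sum_ite_eq]
  rw [hswap, hdiag] at hsum
  nlinarith [hsum]

lemma sum_max_le (a b a' b' : ℝ) (ha : 0 ≤ a) (hb : 0 ≤ b) (ha' : 0 ≤ a') (hb' : 0 ≤ b')
    (h1 : a + a' = 1) (h2 : b + b' = 1) :
    max a b + max a b' + max a' b + max a' b' ≤ 3 := by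
  simp only [max_def]
  split_ifs <;> linarith

/-- The key per-pair inequality for the upper bound. -/
lemma inner_bound {d L : ℕ} {i j : Fin d} (hij : i < j)
    (μ : Fin L → ℝ) (pe : Fin d → Finset (Fin d × Fin 2) → Fin L → ℝ)
    (pd : Fin 2 → Fin d → Fin L → ℝ)
    (hμ : ∀ l, 0 ≤ μ l) (hμs : ∑ l, μ l = 1)
    (hpe : ∀ τ' m l, 0 ≤ pe τ' m l) (hpes : ∀ m l, ∑ τ' : Fin d, pe τ' m l = 1)
    (hpd : ∀ n τ' l, 0 ≤ pd n τ' l) (hpds : ∀ τ' l, ∑ n : Fin 2, pd n τ' l = 1) :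
    ∑ k : Fin 2, ∑ l : Fin 2,
      ((∑ lam, μ lam * pe i ({(i,k),(j,l)} : Finset (Fin d × Fin 2)) lam * pd k i lam)
        + (∑ lam, μ lam * pe j ({(i,k),(j,l)} : Finset (Fin d × Fin 2)) lam * pd l j lam))
      ≤ 3 := by
  have core : ∀ (k l : Fin 2) (lam : Fin L),
      μ lam * pe i ({(i,k),(j,l)} : Finset (Fin d × Fin 2)) lam * pd k i lam
        + μ lam * pe j ({(i,k),(j,l)} : Finset (Fin d × Fin 2)) lam * pd l j lam
      ≤ μ lam * max (pd k i lam) (pd l j lam) := by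
    intro k l lam
    set m : Finset (Fin d × Fin 2) := {(i,k),(j,l)}
    have hsum2 : pe i m lam + pe j m lam ≤ 1 := by
      have hsub := Finset.sum_le_sum_of_subset_of_nonneg
        (Finset.subset_univ ({i,j} : Finset (Fin d))) (fun x _ _ => hpe x m lam)
      rw [Finset.sum_pair hij.ne] at hsub
      exact hsub.trans_eq (hpes m lam)
    have hM0 : 0 ≤ max (pd k i lam) (pd l j lam) :=
      le_trans (hpd k i lam) (le_max_left _ _)
    have e1 : pe i m lam * pd k i lam
        ≤ pe i m lam * max (pd k i lam) (pd l j lam) :=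
      mul_le_mul_of_nonneg_left (le_max_left _ _) (hpe _ _ _)
    have e2 : pe j m lam * pd l j lam
        ≤ pe j m lam * max (pd k i lam) (pd l j lam) :=
      mul_le_mul_of_nonneg_left (le_max_right _ _) (hpe _ _ _)
    have e3 : (pe i m lam + pe j m lam) * max (pd k i lam) (pd l j lam)
        ≤ 1 * max (pd k i lam) (pd l j lam) :=
      mul_le_mul_of_nonneg_right hsum2 hM0
    have e4 : pe i m lam * pd k i lam + pe j m lam * pd l j lam
        ≤ max (pd k i lam) (pd l j lam) := by nlinarith [e1, e2, e3]
    calc μ lam * pe i m lam * pd k i lam + μ lam * pe j m lam * pd l j lam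
        = μ lam * (pe i m lam * pd k i lam + pe j m lam * pd l j lam) := by ring
      _ ≤ μ lam * max (pd k i lam) (pd l j lam) :=
          mul_le_mul_of_nonneg_left e4 (hμ lam)
  have maxsum : ∀ lam : Fin L,
      ∑ k : Fin 2, ∑ l : Fin 2, max (pd k i lam) (pd l j lam) ≤ 3 := by
    intro lam
    have h1 := hpds i lam
    have h2 := hpds j lam
    rw [Fin.sum_univ_two] at h1 h2
    simp only [Fin.sum_univ_two]
    linarith [sum_max_le (pd 0 i lam) (pd 0 j lam) (pd 1 i lam) (pd 1 j lam)
      (hpd 0 i lam) (hpd 0 j lam) (hpd 1 i lam) (hpd 1 j lam) h1 h2]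
  calc ∑ k : Fin 2, ∑ l : Fin 2,
        ((∑ lam, μ lam * pe i ({(i,k),(j,l)} : Finset (Fin d × Fin 2)) lam * pd k i lam)
          + (∑ lam, μ lam * pe j ({(i,k),(j,l)} : Finset (Fin d × Fin 2)) lam * pd l j lam))
      = ∑ k : Fin 2, ∑ l : Fin 2, ∑ lam,
          (μ lam * pe i ({(i,k),(j,l)} : Finset (Fin d × Fin 2)) lam * pd k i lam
            + μ lam * pe j ({(i,k),(j,l)} : Finset (Fin d × Fin 2)) lam * pd l j lam) := by
        refine Finset.sum_congr rfl fun k _ => Finset.sum_congr rfl fun l _ => ?_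
        rw [Finset.sum_add_distrib]
    _ ≤ ∑ k : Fin 2, ∑ l : Fin 2, ∑ lam, μ lam * max (pd k i lam) (pd l j lam) := by
        refine Finset.sum_le_sum fun k _ => Finset.sum_le_sum fun l _ =>
          Finset.sum_le_sum fun lam _ => core k l lam
    _ = ∑ k : Fin 2, ∑ lam, ∑ l : Fin 2, μ lam * max (pd k i lam) (pd l j lam) :=
        Finset.sum_congr rfl fun k _ => Finset.sum_comm
    _ = ∑ lam, ∑ k : Fin 2, ∑ l : Fin 2, μ lam * max (pd k i lam) (pd l j lam) :=
        Finset.sum_comm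
    _ ≤ ∑ lam, μ lam * 3 := by
        refine Finset.sum_le_sum fun lam _ => ?_
        have : ∑ k : Fin 2, ∑ l : Fin 2, μ lam * max (pd k i lam) (pd l j lam)
            = μ lam * ∑ k : Fin 2, ∑ l : Fin 2, max (pd k i lam) (pd l j lam) := by
          simp only [Fin.sum_univ_two]; ring
        rw [this]
        exact mul_le_mul_of_nonneg_left (maxsum lam) (hμ lam)
    _ = 3 := by rw [← Finset.sum_mul, hμs, one_mul]

/-- The optimal deterministic encoder as a 0/1-valued distribution. -/
noncomputable def peS (d : ℕ) (τ' : Fin d) (m : Finset (Fin d × Fin 2)) : ℝ :=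
  if h : (m.filter fun p => p.2 = 0).Nonempty then (if τ' = h.choose.1 then 1 else 0)
  else (if (τ' : ℕ) = 0 then 1 else 0)

lemma peS_nonneg (d : ℕ) (τ' : Fin d) (m : Finset (Fin d × Fin 2)) : 0 ≤ peS d τ' m := by
  unfold peS; split_ifs <;> norm_num

lemma peS_sum (d : ℕ) (hd : 0 < d) (m : Finset (Fin d × Fin 2)) :
    ∑ τ' : Fin d, peS d τ' m = 1 := by
  unfold peS
  split_ifs with h
  · simp
  · have : ∀ τ' : Fin d, ((τ' : ℕ) = 0) ↔ (τ' = ⟨0, hd⟩) := by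
      intro τ'; simp [Fin.ext_iff]
    simp only [this]
    simp

lemma peS_spec {d : ℕ} {i j : Fin d} (hij : i < j) (k l : Fin 2) :
    peS d i {(i,k),(j,l)} * (if k = 0 then (1:ℝ) else 0)
      + peS d j {(i,k),(j,l)} * (if l = 0 then (1:ℝ) else 0)
    = if k = 0 ∨ l = 0 then 1 else 0 := by
  by_cases hk : k = 0
  · have hne : (({(i,k),(j,l)} : Finset (Fin d × Fin 2)).filter fun p => p.2 = 0).Nonempty :=
      ⟨(i,k), by simp [hk]⟩
    unfold peS
    rw [dif_pos hne, dif_pos hne]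
    have hc := hne.choose_spec
    rw [Finset.mem_filter] at hc
    have hm : hne.choose = (i,k) ∨ hne.choose = (j,l) := by simpa using hc.1
    rcases hm with h | h
    · rw [h]; simp [hk, hij.ne']
    · have h2 : l = 0 := by have := hc.2; rw [h] at this; exact this
      rw [h]; simp [hk, h2, hij.ne]
  · by_cases hl : l = 0
    · have hne : (({(i,k),(j,l)} : Finset (Fin d × Fin 2)).filter fun p => p.2 = 0).Nonempty :=
        ⟨(j,l), by simp [hl]⟩
      unfold peS
      rw [dif_pos hne, dif_pos hne]
      have hc := hne.choose_spec
      rw [Finset.mem_filter] at hc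
      have hm : hne.choose = (i,k) ∨ hne.choose = (j,l) := by simpa using hc.1
      rcases hm with h | h
      · exfalso; apply hk; have := hc.2; rw [h] at this; exact this
      · rw [h]; simp [hk, hl, hij.ne]
    · simp [hk, hl]

end Aux

/-- Shared-randomness bound for the pair-relation task (Corollary 2, part (i)):
the maximum payoff over all shared-randomness-assisted wire-reading distributions
equals `3/4`. -/
theorem pair_relation_shared_randomness_bound (d : ℕ) (hd : 2 ≤ d) :
    (∀ (L : ℕ) (μ : Fin L → ℝ)
       (pe : Fin d → Finset (Fin d × Fin 2) → Fin L → ℝ)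
       (pd : Fin 2 → Fin d → Fin L → ℝ),
       (∀ l, 0 ≤ μ l) → (∑ l, μ l = 1) →
       (∀ τ' m l, 0 ≤ pe τ' m l) → (∀ m l, ∑ τ' : Fin d, pe τ' m l = 1) →
       (∀ n τ' l, 0 ≤ pd n τ' l) → (∀ τ' l, ∑ n : Fin 2, pd n τ' l = 1) →
       pairPayoff d (fun τ' n m => ∑ l, μ l * pe τ' m l * pd n τ' l) ≤ 3 / 4) ∧
    (∃ (L : ℕ) (μ : Fin L → ℝ)
       (pe : Fin d → Finset (Fin d × Fin 2) → Fin L → ℝ)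
       (pd : Fin 2 → Fin d → Fin L → ℝ),
       (∀ l, 0 ≤ μ l) ∧ (∑ l, μ l = 1) ∧
       (∀ τ' m l, 0 ≤ pe τ' m l) ∧ (∀ m l, ∑ τ' : Fin d, pe τ' m l = 1) ∧
       (∀ n τ' l, 0 ≤ pd n τ' l) ∧ (∀ τ' l, ∑ n : Fin 2, pd n τ' l = 1) ∧
       pairPayoff d (fun τ' n m => ∑ l, μ l * pe τ' m l * pd n τ' l) = 3 / 4) := by
  have hd2 : (2:ℝ) ≤ (d:ℝ) := by exact_mod_cast hd
  have hd0 : (d:ℝ) ≠ 0 := by linarith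
  have hd1 : (d:ℝ) - 1 ≠ 0 := by intro h; linarith
  set ω : ℝ := 1 / (2 * (d : ℝ) * ((d : ℝ) - 1)) with hωdef
  have hω : 0 ≤ ω := by
    apply div_nonneg (by norm_num)
    nlinarith
  have hfinal : ω * 3 * ((d:ℝ) * ((d:ℝ) - 1)) / 2 = 3 / 4 := by
    rw [hωdef]
    field_simp
    ring
  constructor
  · intro L μ pe pd hμ hμs hpe hpes hpd hpds
    rw [payoff_eq, sum_T]
    refine le_trans (le_of_eq (Finset.sum_congr rfl fun i _ =>
      Finset.sum_congr rfl fun j _ => rfl)) ?_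
    have step : ∀ i j : Fin d,
        (if i < j then ∑ k : Fin 2, ∑ l : Fin 2,
          ω * ((∑ lam, μ lam * pe i ({(i,k),(j,l)} : Finset (Fin d × Fin 2)) lam * pd k i lam)
            + (∑ lam, μ lam * pe j ({(i,k),(j,l)} : Finset (Fin d × Fin 2)) lam * pd l j lam))
          else 0)
        ≤ (if i < j then ω * 3 else 0) := by
      intro i j
      by_cases h : i < j
      · rw [if_pos h, if_pos h]
        have : ∑ k : Fin 2, ∑ l : Fin 2,
            ω * ((∑ lam, μ lam * pe i ({(i,k),(j,l)} : Finset (Fin d × Fin 2)) lam * pd k i lam)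
              + (∑ lam, μ lam * pe j ({(i,k),(j,l)} : Finset (Fin d × Fin 2)) lam * pd l j lam))
            = ω * ∑ k : Fin 2, ∑ l : Fin 2,
              ((∑ lam, μ lam * pe i ({(i,k),(j,l)} : Finset (Fin d × Fin 2)) lam * pd k i lam)
                + (∑ lam, μ lam * pe j ({(i,k),(j,l)} : Finset (Fin d × Fin 2)) lam * pd l j lam)) := by
          simp only [Fin.sum_univ_two]; ring
        rw [this]
        exact mul_le_mul_of_nonneg_left
          (inner_bound h μ pe pd hμ hμs hpe hpes hpd hpds) hω
      · simp [h]
    refine le_trans (Finset.sum_le_sum fun i _ => Finset.sum_le_sum fun j _ => step i j) ?_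
    rw [sum_if_lt d (ω * 3)]
    rw [hfinal]
  · refine ⟨1, fun _ => 1, fun τ' m _ => peS d τ' m, fun n _ _ => if n = 0 then 1 else 0,
      fun _ => by norm_num, by simp,
      fun τ' m _ => peS_nonneg d τ' m, fun m _ => peS_sum d (by omega) m,
      fun n τ' _ => by dsimp only; split_ifs <;> norm_num,
      fun τ' _ => by simp [Fin.sum_univ_two],
      ?_⟩
    rw [payoff_eq, sum_T]
    have step : ∀ i j : Fin d,
        (if i < j then ∑ k : Fin 2, ∑ l : Fin 2,
          ω * ((∑ _lam : Fin 1, (1:ℝ) * peS d i ({(i,k),(j,l)} : Finset (Fin d × Fin 2))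
                  * (if k = 0 then (1:ℝ) else 0))
            + (∑ _lam : Fin 1, (1:ℝ) * peS d j ({(i,k),(j,l)} : Finset (Fin d × Fin 2))
                  * (if l = 0 then (1:ℝ) else 0)))
          else 0)
        = (if i < j then ω * 3 else 0) := by
      intro i j
      by_cases h : i < j
      · rw [if_pos h, if_pos h]
        have hkl : ∀ k l : Fin 2,
            ω * ((∑ _lam : Fin 1, (1:ℝ) * peS d i ({(i,k),(j,l)} : Finset (Fin d × Fin 2))
                    * (if k = 0 then (1:ℝ) else 0))
              + (∑ _lam : Fin 1, (1:ℝ) * peS d j ({(i,k),(j,l)} : Finset (Fin d × Fin 2))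
                    * (if l = 0 then (1:ℝ) else 0)))
            = ω * (if k = 0 ∨ l = 0 then 1 else 0) := by
          intro k l
          congr 1
          rw [Fin.sum_univ_one, Fin.sum_univ_one, one_mul, one_mul]
          exact peS_spec h k l
        simp only [hkl]
        rw [Fin.sum_univ_two]
        simp only [Fin.sum_univ_two]
        norm_num
        ring
      · simp [h]
    rw [Finset.sum_congr rfl fun i _ => Finset.sum_congr rfl fun j _ => step i j]
    rw [sum_if_lt d (ω * 3)]
    exact hfinal
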